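/- Worst-case imbalance over the linear model class with bounded coefficients and unbounded intercept: let each unit i carry a feature vector ψ_i ∈ ℝ^d, let C > 0, and let Ψ = { v ↦ α + ⟨β, v⟩ : α ∈ ℝ, ‖β‖₂ ≤ C } be the model class. If the control weights satisfy Σ_{A_ℓ=0} Σ_{i: J_i=ℓ} γ_i = n₁, then sup_{f ∈ Ψ} | (1/n₁) Σ_{A_ℓ=0} Σ_{i: J_i=ℓ} γ_i f(ψ_i) − (1/n₁) Σ_{A_ℓ=1} Σ_{i: J_i=ℓ} f(ψ_i) | = C · ‖ (1/n₁) Σ_{A_ℓ=0} Σ_{i: J_i=ℓ} γ_i ψ_i − (1/n₁) Σ_{A_ℓ=1} Σ_{i: J_i=ℓ} ψ_i ‖₂, so the balancing objective in Equation 7 implements the worst-case bias over the class Ψ. -/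

import Mathlib

open Finset

/-- Worst-case imbalance over the linear model class with `L²`-bounded coefficients and
unbounded intercept: if the control weights sum to `n₁`, the supremum of the absolute
imbalance over `Ψ = {v ↦ α + ⟨β, v⟩ : ‖β‖₂ ≤ C}` equals `C` times the Euclidean norm of the
vector of imbalances in the features. -/
theorem stmt_4 (m N d : ℕ) (A : Fin m → Bool) (J : Fin N → Fin m)
    (γ : Fin N → ℝ) (ψ : Fin N → EuclideanSpace ℝ (Fin d)) (C : ℝ) (hC : 0 < C)
    (n1 : ℕ)
    (hn1 : n1 = ∑ ℓ ∈ univ.filter (fun ℓ => A ℓ = true),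
      (univ.filter (fun i => J i = ℓ)).card)
    (hn1pos : 0 < n1)
    (hsize : ∀ ℓ : Fin m, 1 ≤ (univ.filter (fun i => J i = ℓ)).card)
    (hsum : ∑ ℓ ∈ univ.filter (fun ℓ => A ℓ = false),
      ∑ i ∈ univ.filter (fun i => J i = ℓ), γ i = (n1 : ℝ)) :
    sSup {z : ℝ | ∃ α : ℝ, ∃ β : EuclideanSpace ℝ (Fin d), ‖β‖ ≤ C ∧
        z = |((1 : ℝ) / n1) * (∑ ℓ ∈ univ.filter (fun ℓ => A ℓ = false),
              ∑ i ∈ univ.filter (fun i => J i = ℓ), γ i * (α + (inner ℝ β (ψ i) : ℝ)))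
            - ((1 : ℝ) / n1) * (∑ ℓ ∈ univ.filter (fun ℓ => A ℓ = true),
              ∑ i ∈ univ.filter (fun i => J i = ℓ), (α + (inner ℝ β (ψ i) : ℝ)))|}
      = C * ‖((1 : ℝ) / n1) • (∑ ℓ ∈ univ.filter (fun ℓ => A ℓ = false),
              ∑ i ∈ univ.filter (fun i => J i = ℓ), γ i • ψ i)
            - ((1 : ℝ) / n1) • (∑ ℓ ∈ univ.filter (fun ℓ => A ℓ = true),
              ∑ i ∈ univ.filter (fun i => J i = ℓ), ψ i)‖ := by
  set S0 : EuclideanSpace ℝ (Fin d) := ∑ ℓ ∈ univ.filter (fun ℓ => A ℓ = false),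
      ∑ i ∈ univ.filter (fun i => J i = ℓ), γ i • ψ i with hS0
  set S1 : EuclideanSpace ℝ (Fin d) := ∑ ℓ ∈ univ.filter (fun ℓ => A ℓ = true),
      ∑ i ∈ univ.filter (fun i => J i = ℓ), ψ i with hS1
  set Δ : EuclideanSpace ℝ (Fin d) := ((1 : ℝ) / n1) • S0 - ((1 : ℝ) / n1) • S1 with hΔ
  have hn1R : (0 : ℝ) < (n1 : ℝ) := by exact_mod_cast hn1pos
  have hkey : ∀ (α : ℝ) (β : EuclideanSpace ℝ (Fin d)),
      ((1 : ℝ) / n1) * (∑ ℓ ∈ univ.filter (fun ℓ => A ℓ = false),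
              ∑ i ∈ univ.filter (fun i => J i = ℓ), γ i * (α + (inner ℝ β (ψ i) : ℝ)))
            - ((1 : ℝ) / n1) * (∑ ℓ ∈ univ.filter (fun ℓ => A ℓ = true),
              ∑ i ∈ univ.filter (fun i => J i = ℓ), (α + (inner ℝ β (ψ i) : ℝ)))
      = (inner ℝ β Δ : ℝ) := by
    intro α β
    have h0 : (∑ ℓ ∈ univ.filter (fun ℓ => A ℓ = false),
        ∑ i ∈ univ.filter (fun i => J i = ℓ), γ i * (α + (inner ℝ β (ψ i) : ℝ)))
        = (n1 : ℝ) * α + (inner ℝ β S0 : ℝ) := by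
      have : ∀ ℓ ∈ univ.filter (fun ℓ => A ℓ = false),
          (∑ i ∈ univ.filter (fun i => J i = ℓ), γ i * (α + (inner ℝ β (ψ i) : ℝ)))
          = (∑ i ∈ univ.filter (fun i => J i = ℓ), γ i) * α
            + (inner ℝ β (∑ i ∈ univ.filter (fun i => J i = ℓ), γ i • ψ i) : ℝ) := by
        intro ℓ _
        rw [inner_sum, Finset.sum_mul, ← Finset.sum_add_distrib]
        refine Finset.sum_congr rfl fun i _ => ?_
        rw [real_inner_smul_right]
        ring
      rw [Finset.sum_congr rfl this, Finset.sum_add_distrib, ← Finset.sum_mul, hsum,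
        hS0, inner_sum]
    have h1 : (∑ ℓ ∈ univ.filter (fun ℓ => A ℓ = true),
        ∑ i ∈ univ.filter (fun i => J i = ℓ), (α + (inner ℝ β (ψ i) : ℝ)))
        = (n1 : ℝ) * α + (inner ℝ β S1 : ℝ) := by
      have : ∀ ℓ ∈ univ.filter (fun ℓ => A ℓ = true),
          (∑ i ∈ univ.filter (fun i => J i = ℓ), (α + (inner ℝ β (ψ i) : ℝ)))
          = ((univ.filter (fun i => J i = ℓ)).card : ℝ) * α
            + (inner ℝ β (∑ i ∈ univ.filter (fun i => J i = ℓ), ψ i) : ℝ) := by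
        intro ℓ _
        rw [inner_sum, Finset.sum_add_distrib, Finset.sum_const, nsmul_eq_mul]
      rw [Finset.sum_congr rfl this, Finset.sum_add_distrib, ← Finset.sum_mul,
        hS1, inner_sum, ← Nat.cast_sum, ← hn1]
    rw [h0, h1, hΔ, inner_sub_right, real_inner_smul_right, real_inner_smul_right]
    field_simp
    ring
  have hset : {z : ℝ | ∃ α : ℝ, ∃ β : EuclideanSpace ℝ (Fin d), ‖β‖ ≤ C ∧
        z = |((1 : ℝ) / n1) * (∑ ℓ ∈ univ.filter (fun ℓ => A ℓ = false),
              ∑ i ∈ univ.filter (fun i => J i = ℓ), γ i * (α + (inner ℝ β (ψ i) : ℝ)))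
            - ((1 : ℝ) / n1) * (∑ ℓ ∈ univ.filter (fun ℓ => A ℓ = true),
              ∑ i ∈ univ.filter (fun i => J i = ℓ), (α + (inner ℝ β (ψ i) : ℝ)))|}
      = {z : ℝ | ∃ β : EuclideanSpace ℝ (Fin d), ‖β‖ ≤ C ∧ z = |(inner ℝ β Δ : ℝ)|} := by
    ext z
    constructor
    · rintro ⟨α, β, hβ, hz⟩
      exact ⟨β, hβ, by rw [hz, hkey]⟩
    · rintro ⟨β, hβ, hz⟩
      exact ⟨0, β, hβ, by rw [hz, hkey]⟩
  rw [hset]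
  apply IsGreatest.csSup_eq
  constructor
  · -- membership
    by_cases hΔ0 : Δ = 0
    · refine ⟨0, by simpa using hC.le, ?_⟩
      simp [hΔ0]
    · have hnΔ : (0 : ℝ) < ‖Δ‖ := norm_pos_iff.mpr hΔ0
      refine ⟨(C / ‖Δ‖) • Δ, ?_, ?_⟩
      · rw [norm_smul]
        simp only [Real.norm_eq_abs, abs_div, abs_of_pos hC, abs_of_pos hnΔ]
        rw [div_mul_cancel₀ _ hnΔ.ne']
      · rw [real_inner_smul_left, real_inner_self_eq_norm_sq]
        rw [abs_of_nonneg (by positivity)]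
        field_simp
  · rintro z ⟨β, hβ, rfl⟩
    calc |(inner ℝ β Δ : ℝ)| ≤ ‖β‖ * ‖Δ‖ := abs_real_inner_le_norm β Δ
    _ ≤ C * ‖Δ‖ := mul_le_mul_of_nonneg_right hβ (norm_nonneg _)
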